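/- Let m = ⟨X,Y⟩ ⊂ ℂ[[X,Y]], let f ∈ m, and suppose m^k ⊆ m·J(f) + ⟨f⟩ for some k ≥ 1. Then for any g ∈ ℂ[[X,Y]] with g - f ∈ m^{k+1} one has m^k ⊆ m·J(g) + ⟨g⟩ (the determinacy hypothesis is stable under perturbation by m^{k+1}). -/

import Mathlib

open MvPowerSeries

/-- Partial derivative of a formal power series in two variables. -/
noncomputable def pderivPS (i : Fin 2) (f : MvPowerSeries (Fin 2) ℂ) :
    MvPowerSeries (Fin 2) ℂ :=
  fun n => ((n i : ℂ) + 1) * coeff (n + Finsupp.single i 1) f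

/-- Jacobian ideal of a formal power series in two variables. -/
noncomputable def jacobianIdeal (f : MvPowerSeries (Fin 2) ℂ) :
    Ideal (MvPowerSeries (Fin 2) ℂ) :=
  Ideal.span {pderivPS 0 f, pderivPS 1 f}

namespace DetAux

noncomputable abbrev R := MvPowerSeries (Fin 2) ℂ

noncomputable def deg (n : Fin 2 →₀ ℕ) : ℕ := n 0 + n 1

lemma deg_add (a b : Fin 2 →₀ ℕ) : deg (a + b) = deg a + deg b := by
  simp [deg]; ring

lemma deg_eq_zero {n : Fin 2 →₀ ℕ} (h : deg n = 0) : n = 0 := by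
  rw [deg] at h
  ext i; fin_cases i <;> simp <;> omega

lemma deg_single (i : Fin 2) : deg (Finsupp.single i 1) = 1 := by
  fin_cases i <;> simp [deg]

/-- The ideal of series whose coefficients in degree `< j` vanish. -/
noncomputable def V (j : ℕ) : Ideal R where
  carrier := {h | ∀ n : Fin 2 →₀ ℕ, deg n < j → coeff n h = 0}
  add_mem' := by
    intro a b ha hb n hn
    rw [map_add, ha n hn, hb n hn, add_zero]
  zero_mem' := by intro n hn; simp
  smul_mem' := by
    intro r h hh n hn
    rw [smul_eq_mul]
    classical
    rw [coeff_mul]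
    apply Finset.sum_eq_zero
    intro p hp
    rw [Finset.HasAntidiagonal.mem_antidiagonal] at hp
    have : deg p.2 ≤ deg n := by rw [← hp, deg_add]; omega
    rw [hh p.2 (lt_of_le_of_lt this hn), mul_zero]

lemma mem_V {j : ℕ} {h : R} : h ∈ V j ↔ ∀ n : Fin 2 →₀ ℕ, deg n < j → coeff n h = 0 :=
  Iff.rfl

noncomputable abbrev mm : Ideal R := Ideal.span ({X 0, X 1} : Set R)

lemma X_mem_V1 (i : Fin 2) : (X i : R) ∈ V 1 := by
  intro n hn
  have hn0 : n = 0 := deg_eq_zero (by omega)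
  classical
  rw [coeff_X, if_neg]
  rw [hn0]
  intro hc
  have := DFunLike.congr_fun hc.symm i
  simp at this

lemma mm_le_V1 : mm ≤ V 1 := by
  rw [mm, Ideal.span_le]
  rintro x (rfl | rfl) <;> exact X_mem_V1 _

lemma mul_mem_V {j : ℕ} {a b : R} (ha : a ∈ V 1) (hb : b ∈ V j) : a * b ∈ V (j + 1) := by
  intro n hn
  classical
  rw [coeff_mul]
  apply Finset.sum_eq_zero
  intro p hp
  rw [Finset.HasAntidiagonal.mem_antidiagonal] at hp
  have hd : deg p.1 + deg p.2 = deg n := by rw [← deg_add, hp]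
  by_cases h1 : deg p.1 = 0
  · rw [ha p.1 (by omega), zero_mul]
  · rw [hb p.2 (by omega), mul_zero]

lemma mm_pow_le_V (j : ℕ) : mm ^ j ≤ V j := by
  induction j with
  | zero => intro x _; intro n hn; omega
  | succ j ih =>
    rw [pow_succ']
    rw [Ideal.mul_le]
    intro a ha b hb
    exact mul_mem_V (mm_le_V1 ha) (ih hb)

lemma coeff_X_mul (i : Fin 2) (a : R) (n : Fin 2 →₀ ℕ) :
    coeff n (X i * a) =
      if Finsupp.single i 1 ≤ n then coeff (n - Finsupp.single i 1) a else 0 := by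
  classical
  rw [X, coeff_monomial_mul]
  split <;> simp

lemma V_le_mm_pow (j : ℕ) : V j ≤ mm ^ j := by
  induction j with
  | zero => intro x _; simp
  | succ j ih =>
    intro h hh
    classical
    set h0 : R := fun n => coeff (n + Finsupp.single 0 1) h with hh0
    set h1 : R := fun n => if n 0 = 0 then coeff (n + Finsupp.single 1 1) h else 0 with hh1
    have hsplit : h = X 0 * h0 + X 1 * h1 := by
      ext n
      rw [map_add, coeff_X_mul, coeff_X_mul]
      by_cases hn0 : 1 ≤ n 0
      · have hle : Finsupp.single (0 : Fin 2) 1 ≤ n := by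
          rw [Finsupp.single_le_iff]; exact hn0
        have hnle : ¬ Finsupp.single (1 : Fin 2) 1 ≤ n ∨ True := Or.inr trivial
        rw [if_pos hle]
        have e1 : coeff (n - Finsupp.single 0 1) h0 = coeff n h := by
          show h (n - Finsupp.single 0 1 + Finsupp.single 0 1) = h n
          congr 1
          ext i
          simp only [Finsupp.coe_add, Finsupp.coe_tsub, Pi.add_apply, Pi.sub_apply]
          fin_cases i <;> simp <;> omega
        rw [e1]
        have e2 : (if Finsupp.single (1:Fin 2) 1 ≤ n then
            coeff (n - Finsupp.single 1 1) h1 else 0) = 0 := by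
          split
          · rw [coeff_apply, hh1]
            simp only
            rw [if_neg]
            simp only [Finsupp.coe_tsub, Pi.sub_apply]
            rw [Finsupp.single_apply]
            simp
            omega
          · rfl
        rw [e2, add_zero]
      · rw [if_neg (by rw [Finsupp.single_le_iff]; omega)]
        by_cases hn1 : 1 ≤ n 1
        · have hle : Finsupp.single (1 : Fin 2) 1 ≤ n := by
            rw [Finsupp.single_le_iff]; exact hn1
          rw [if_pos hle, zero_add]
          show h n = if (n - Finsupp.single 1 1 : Fin 2 →₀ ℕ) 0 = 0 then h (n - Finsupp.single 1 1 + Finsupp.single 1 1) else 0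
          rw [if_pos (by
            simp only [Finsupp.coe_tsub, Pi.sub_apply]
            rw [Finsupp.single_apply]
            simp
            omega)]
          congr 1
          ext i
          simp only [Finsupp.coe_add, Finsupp.coe_tsub, Pi.add_apply, Pi.sub_apply]
          fin_cases i <;> simp <;> omega
        · rw [if_neg (by rw [Finsupp.single_le_iff]; omega)]
          rw [add_zero]
          exact hh n (by simp [deg]; omega)
    have hm0 : h0 ∈ V j := by
      intro n hn
      show coeff (n + Finsupp.single 0 1) h = 0
      exact hh _ (by rw [deg_add, deg_single]; omega)
    have hm1 : h1 ∈ V j := by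
      intro n hn
      show (if n 0 = 0 then coeff (n + Finsupp.single 1 1) h else 0) = 0
      split
      · exact hh _ (by rw [deg_add, deg_single]; omega)
      · rfl
    rw [hsplit, pow_succ']
    exact add_mem (Ideal.mul_mem_mul (Ideal.subset_span (by simp)) (ih hm0))
      (Ideal.mul_mem_mul (Ideal.subset_span (by simp)) (ih hm1))

lemma pderiv_mem_V {k : ℕ} {h : R} (hh : h ∈ V (k + 1)) (i : Fin 2) :
    pderivPS i h ∈ V k := by
  intro n hn
  show ((n i : ℂ) + 1) * coeff (n + Finsupp.single i 1) h = 0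
  rw [hh _ (by rw [deg_add, deg_single]; omega), mul_zero]

lemma pderiv_add (i : Fin 2) (a b : R) :
    pderivPS i (a + b) = pderivPS i a + pderivPS i b := by
  funext n
  show ((n i : ℂ) + 1) * coeff (n + Finsupp.single i 1) (a + b) =
    ((n i : ℂ) + 1) * coeff (n + Finsupp.single i 1) a +
      ((n i : ℂ) + 1) * coeff (n + Finsupp.single i 1) b
  rw [map_add]; ring


lemma not_isUnit_X (i : Fin 2) : ¬ IsUnit (X i : MvPowerSeries (Fin 2) ℂ) := by
  intro hu
  rw [MvPowerSeries.isUnit_iff_constantCoeff, constantCoeff_X] at hu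
  exact not_isUnit_zero hu

end DetAux

set_option maxHeartbeats 1000000 in
open DetAux in
/-- Stability of the determinacy criterion: if `f ∈ m` satisfies
`m^k ⊆ m·J(f) + ⟨f⟩` and `g - f ∈ m^{k+1}`, then `m^k ⊆ m·J(g) + ⟨g⟩`. -/
theorem determinacy_criterion_stable (k : ℕ) (hk : 1 ≤ k)
    (f g : MvPowerSeries (Fin 2) ℂ)
    (hf : f ∈ Ideal.span ({X 0, X 1} : Set (MvPowerSeries (Fin 2) ℂ)))
    (hdet : (Ideal.span ({X 0, X 1} : Set (MvPowerSeries (Fin 2) ℂ))) ^ k ≤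
      Ideal.span ({X 0, X 1} : Set (MvPowerSeries (Fin 2) ℂ)) * jacobianIdeal f ⊔
        Ideal.span ({f} : Set (MvPowerSeries (Fin 2) ℂ)))
    (hg : g - f ∈ (Ideal.span ({X 0, X 1} : Set (MvPowerSeries (Fin 2) ℂ))) ^ (k + 1)) :
    (Ideal.span ({X 0, X 1} : Set (MvPowerSeries (Fin 2) ℂ))) ^ k ≤
      Ideal.span ({X 0, X 1} : Set (MvPowerSeries (Fin 2) ℂ)) * jacobianIdeal g ⊔
        Ideal.span ({g} : Set (MvPowerSeries (Fin 2) ℂ)) := by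
  classical
  have hderiv : ∀ i : Fin 2, pderivPS i (g - f) ∈ mm ^ k :=
    fun i => V_le_mm_pow k (pderiv_mem_V (mm_pow_le_V (k+1) hg) i)
  have hJ : jacobianIdeal f ≤ jacobianIdeal g ⊔ mm ^ k := by
    rw [jacobianIdeal, Ideal.span_le]
    have key : ∀ i : Fin 2, pderivPS i f = pderivPS i g - pderivPS i (g - f) := by
      intro i
      have h1 := pderiv_add i f (g - f)
      rw [show f + (g - f) = g by ring] at h1
      rw [h1]; ring
    rintro x (rfl | rfl)
    · rw [key 0]
      exact sub_mem
        (Ideal.mem_sup_left (Ideal.subset_span (Set.mem_insert _ _)))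
        (Ideal.mem_sup_right (hderiv 0))
    · rw [key 1]
      exact sub_mem
        (Ideal.mem_sup_left (Ideal.subset_span (by right; rfl)))
        (Ideal.mem_sup_right (hderiv 1))
  have h1 : mm * jacobianIdeal f ≤ mm * jacobianIdeal g ⊔ mm ^ (k + 1) := by
    calc mm * jacobianIdeal f ≤ mm * (jacobianIdeal g ⊔ mm ^ k) := Ideal.mul_mono_right hJ
    _ = mm * jacobianIdeal g ⊔ mm * mm ^ k := Ideal.mul_sup _ _ _
    _ = mm * jacobianIdeal g ⊔ mm ^ (k + 1) := by rw [← pow_succ']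
  have h2 : Ideal.span ({f} : Set R) ≤ Ideal.span ({g} : Set R) ⊔ mm ^ (k + 1) := by
    rw [Ideal.span_le, Set.singleton_subset_iff]
    have hfg : f = g - (g - f) := by ring
    rw [hfg]
    exact sub_mem (Ideal.mem_sup_left (Ideal.subset_span rfl)) (Ideal.mem_sup_right hg)
  have hbig : mm ^ k ≤ (mm * jacobianIdeal g ⊔ Ideal.span ({g} : Set R)) ⊔ mm • mm ^ k := by
    have hsm : mm • mm ^ k = mm ^ (k + 1) := by rw [smul_eq_mul, ← pow_succ']
    rw [hsm]
    refine le_trans hdet (le_trans (sup_le_sup h1 h2) ?_)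
    rw [sup_sup_sup_comm, sup_idem]
  have hfgM : (mm ^ k).FG := (Submodule.fg_span (Set.toFinite _)).pow k
  have hjac : mm ≤ Ideal.jacobson (⊥ : Ideal R) := by
    rw [IsLocalRing.jacobson_eq_maximalIdeal (⊥ : Ideal R) bot_ne_top, mm, Ideal.span_le]
    rintro x (rfl | rfl) <;> exact not_isUnit_X _
  exact Submodule.le_of_le_smul_of_le_jacobson_bot hfgM hjac hbig
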